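/- The function f(p) := Σ_{i≠j} p_i p_j (1 + 2/(p_i + p_j)) (with summands interpreted as 0 when p_i + p_j = 0) is concave on the probability simplex in ℝ^d: for any two probability vectors p, q ∈ ℝ^d and any t ∈ [0,1], f(t p + (1−t) q) ≥ t f(p) + (1−t) f(q). -/

import Mathlib

/-- The average steering quantifier `f(p) = Σ_{i≠j} p i * p j * (1 + 2/(p i + p j))`;
summands with `p i + p j = 0` vanish (in Lean, `2/0 = 0` and `p i * p j = 0` then). -/
noncomputable def fAvg {d : ℕ} (p : Fin d → ℝ) : ℝ :=
  ∑ i, ∑ j, if i ≠ j then p i * p j * (1 + 2 / (p i + p j)) else 0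

/-- Concavity of `(x, y) ↦ x * y / (x + y)` on the nonnegative quadrant
(with the Lean convention `0 / 0 = 0`). -/
lemma hconc (t x1 y1 x2 y2 : ℝ) (ht0 : 0 ≤ t) (ht1 : t ≤ 1)
    (hx1 : 0 ≤ x1) (hy1 : 0 ≤ y1) (hx2 : 0 ≤ x2) (hy2 : 0 ≤ y2) :
    t * (x1 * y1 / (x1 + y1)) + (1 - t) * (x2 * y2 / (x2 + y2)) ≤
    (t * x1 + (1 - t) * x2) * (t * y1 + (1 - t) * y2) /
      ((t * x1 + (1 - t) * x2) + (t * y1 + (1 - t) * y2)) := by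
  have ht1' : 0 ≤ 1 - t := by linarith
  have hA : 0 ≤ t * x1 + (1 - t) * x2 :=
    add_nonneg (mul_nonneg ht0 hx1) (mul_nonneg ht1' hx2)
  have hB : 0 ≤ t * y1 + (1 - t) * y2 :=
    add_nonneg (mul_nonneg ht0 hy1) (mul_nonneg ht1' hy2)
  rcases eq_or_lt_of_le (add_nonneg hA hB) with hs | hs
  · -- degenerate case: the combined denominator is 0
    have htx1 : t * x1 = 0 := by
      nlinarith [mul_nonneg ht0 hx1, mul_nonneg ht1' hx2, mul_nonneg ht0 hy1,
        mul_nonneg ht1' hy2]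
    have htx2 : (1 - t) * x2 = 0 := by
      nlinarith [mul_nonneg ht0 hx1, mul_nonneg ht1' hx2, mul_nonneg ht0 hy1,
        mul_nonneg ht1' hy2]
    have h1 : t * (x1 * y1 / (x1 + y1)) = 0 := by
      rcases mul_eq_zero.mp htx1 with h | h
      · rw [h]; ring
      · rw [h]; simp
    have h2 : (1 - t) * (x2 * y2 / (x2 + y2)) = 0 := by
      rcases mul_eq_zero.mp htx2 with h | h
      · rw [h]; ring
      · rw [h]; simp
    have ha0 : t * x1 + (1 - t) * x2 = 0 := by linarith [htx1, htx2]
    rw [h1, h2, ha0]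
    simp
  · rw [le_div_iff₀ hs]
    rcases eq_or_lt_of_le (add_nonneg hx1 hy1) with hs1 | hs1
    · -- x1 + y1 = 0, so x1 = y1 = 0
      have hx1' : x1 = 0 := by nlinarith
      have hy1' : y1 = 0 := by nlinarith
      subst hx1'; subst hy1'
      rcases eq_or_lt_of_le (add_nonneg hx2 hy2) with hs2 | hs2
      · have hx2' : x2 = 0 := by nlinarith
        have hy2' : y2 = 0 := by nlinarith
        subst hx2'; subst hy2'
        simp at hs
      · have e2' : (1 - t) * (x2 * y2 / (x2 + y2)) * ((1 - t) * x2 + (1 - t) * y2)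
            = (1 - t) * (1 - t) * (x2 * y2) := by
          field_simp
        nlinarith [e2']
    · rcases eq_or_lt_of_le (add_nonneg hx2 hy2) with hs2 | hs2
      · -- x2 + y2 = 0, so x2 = y2 = 0
        have hx2' : x2 = 0 := by nlinarith
        have hy2' : y2 = 0 := by nlinarith
        subst hx2'; subst hy2'
        have e1' : t * (x1 * y1 / (x1 + y1)) * (t * x1 + t * y1)
            = t * t * (x1 * y1) := by
          field_simp
        nlinarith [e1']
      · -- main case: both denominators positive
        have key : t * (x1 * y1 / (x1 + y1)) + (1 - t) * (x2 * y2 / (x2 + y2)) =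
            (t * (x1 * y1) * (x2 + y2) + (1 - t) * (x2 * y2) * (x1 + y1)) /
              ((x1 + y1) * (x2 + y2)) := by
          field_simp
        rw [key, div_mul_eq_mul_div, div_le_iff₀ (mul_pos hs1 hs2)]
        nlinarith [mul_nonneg (mul_nonneg ht0 ht1') (sq_nonneg (x1 * y2 - x2 * y1))]

lemma fAvg_eq {d : ℕ} (p : Fin d → ℝ) :
    fAvg p = (∑ i, p i) * (∑ i, p i) - (∑ i, p i * p i)
      + 2 * ∑ i, ∑ j, if i ≠ j then p i * p j / (p i + p j) else 0 := by
  have h1 : ∀ i j : Fin d,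
      (if i ≠ j then p i * p j * (1 + 2 / (p i + p j)) else 0)
      = p i * p j - (if i = j then p i * p j else 0)
        + 2 * (if i ≠ j then p i * p j / (p i + p j) else 0) := by
    intro i j
    by_cases h : i = j
    · simp [h]
    · have h' : i ≠ j := h
      rw [if_pos h', if_pos h', if_neg h]
      ring
  unfold fAvg
  simp_rw [h1, Finset.sum_add_distrib, Finset.sum_sub_distrib, ← Finset.mul_sum]
  rw [← Finset.sum_mul]
  congr 2
  apply Finset.sum_congr rfl
  intro i _
  simp

/-- `f` is concave on the probability simplex in `ℝ^d`: for probability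
vectors `p, q` and `t ∈ [0,1]`, `f(t p + (1−t) q) ≥ t f(p) + (1−t) f(q)`. -/
theorem stmt13 (d : ℕ) (p q : Fin d → ℝ)
    (hpnonneg : ∀ i, 0 ≤ p i) (hpsum : ∑ i, p i = 1)
    (hqnonneg : ∀ i, 0 ≤ q i) (hqsum : ∑ i, q i = 1)
    (t : ℝ) (ht0 : 0 ≤ t) (ht1 : t ≤ 1) :
    t * fAvg p + (1 - t) * fAvg q ≤ fAvg (fun i => t * p i + (1 - t) * q i) := by
  have ht1' : 0 ≤ 1 - t := by linarith
  set m : Fin d → ℝ := fun i => t * p i + (1 - t) * q i with hm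
  have hmsum : ∑ i, m i = 1 := by
    simp only [hm]
    rw [Finset.sum_add_distrib, ← Finset.mul_sum, ← Finset.mul_sum, hpsum, hqsum]
    ring
  have hsq : ∑ i, m i * m i ≤ t * ∑ i, p i * p i + (1 - t) * ∑ i, q i * q i := by
    rw [Finset.mul_sum, Finset.mul_sum, ← Finset.sum_add_distrib]
    apply Finset.sum_le_sum
    intro i _
    simp only [hm]
    nlinarith [sq_nonneg (p i - q i), mul_nonneg ht0 ht1']
  have hS : t * (∑ i, ∑ j, if i ≠ j then p i * p j / (p i + p j) else 0)
          + (1 - t) * (∑ i, ∑ j, if i ≠ j then q i * q j / (q i + q j) else 0)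
          ≤ ∑ i, ∑ j, if i ≠ j then m i * m j / (m i + m j) else 0 := by
    rw [Finset.mul_sum, Finset.mul_sum, ← Finset.sum_add_distrib]
    apply Finset.sum_le_sum
    intro i _
    rw [Finset.mul_sum, Finset.mul_sum, ← Finset.sum_add_distrib]
    apply Finset.sum_le_sum
    intro j _
    by_cases h : i = j
    · simp [h]
    · simp only [h, ne_eq, not_false_iff, if_true, if_neg]
      exact hconc t (p i) (p j) (q i) (q j) ht0 ht1
        (hpnonneg i) (hpnonneg j) (hqnonneg i) (hqnonneg j)
  rw [fAvg_eq p, fAvg_eq q, fAvg_eq m, hpsum, hqsum, hmsum]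
  linarith [hsq, hS]
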